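/- For every simple graph G, all vertices x, y of G, and every k ≥ 0, the compressed graph G_{x→y} satisfies m_k(G_{x→y}) ≤ m_k(G). -/

import Mathlib

open Classical

/-- `N_G(x, ȳ)`: the set of vertices other than `x` and `y` adjacent to `x`
but not to `y`. -/
def sideNbhd {V : Type*} (G : SimpleGraph V) (x y : V) : Set V :=
  {v | v ≠ x ∧ v ≠ y ∧ G.Adj x v ∧ ¬ G.Adj y v}

/-- The compression `G_{x→y}` of `G` from `x` to `y`: delete all edges between `x`
and `N_G(x, ȳ)` and add all edges between `y` and `N_G(x, ȳ)`. -/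
def compress {V : Type*} (G : SimpleGraph V) (x y : V) : SimpleGraph V :=
  SimpleGraph.fromEdgeSet
    ((G.edgeSet \ {e | ∃ v ∈ sideNbhd G x y, e = s(x, v)}) ∪
      {e | ∃ v ∈ sideNbhd G x y, e = s(y, v)})

/-- `d₂(G) = Σ_v deg(v)²`. -/
noncomputable def d2 {V : Type*} [Fintype V] (G : SimpleGraph V) : ℕ :=
  ∑ v : V, (G.neighborSet v).ncard ^ 2

/-- The closed neighborhood `N_G[x]`. -/
def closedNbhd {V : Type*} (G : SimpleGraph V) (x : V) : Set V :=
  insert x (G.neighborSet x)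

/-- The set of matchings of a simple graph `G`: sets of pairwise non-incident edges
(the empty set counts). -/
noncomputable def graphMatchings {V : Type*} [Fintype V] (G : SimpleGraph V) :
    Finset (Finset (Sym2 V)) :=
  G.edgeFinset.powerset.filter fun M => ∀ e ∈ M, ∀ f ∈ M, e ≠ f → ∀ v : V, v ∈ e → v ∉ f

/-- `m_k(G)`: the number of matchings of size `k` in `G`. -/
noncomputable def mkCount {V : Type*} [Fintype V] (G : SimpleGraph V) (k : ℕ) : ℕ :=
  ((graphMatchings G).filter fun M => M.card = k).card

section Aux
variable {V : Type*} [Fintype V]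

lemma mem_graphMatchings' {G : SimpleGraph V} {M : Finset (Sym2 V)} :
    M ∈ graphMatchings G ↔ (∀ e ∈ M, e ∈ G.edgeSet) ∧
      ∀ e ∈ M, ∀ f ∈ M, ∀ v : V, v ∈ e → v ∈ f → e = f := by
  unfold graphMatchings
  simp only [Finset.mem_filter, Finset.mem_powerset]
  constructor
  · rintro ⟨hs, hp⟩
    refine ⟨fun e he => ?_, fun e he f hf v hv hvf => ?_⟩
    · have := hs he; rwa [SimpleGraph.mem_edgeFinset] at this
    · by_contra hne; exact hp e he f hf hne v hv hvf
  · rintro ⟨hs, hp⟩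
    refine ⟨fun e he => ?_, fun e he f hf hne v hv hvf => hne (hp e he f hf v hv hvf)⟩
    rw [SimpleGraph.mem_edgeFinset]; exact hs e he

lemma mem_compress_edgeSet {G : SimpleGraph V} {x y : V} {e : Sym2 V} :
    e ∈ (compress G x y).edgeSet ↔
      (e ∈ G.edgeSet ∧ ∀ v ∈ sideNbhd G x y, e ≠ s(x, v)) ∨
        ∃ v ∈ sideNbhd G x y, e = s(y, v) := by
  unfold compress
  rw [SimpleGraph.edgeSet_fromEdgeSet]
  constructor
  · rintro ⟨h, -⟩
    rcases h with ⟨he, hnot⟩ | h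
    · exact Or.inl ⟨he, fun v hv hev => hnot ⟨v, hv, hev⟩⟩
    · exact Or.inr h
  · rintro (⟨he, hnot⟩ | ⟨v, hv, rfl⟩)
    · exact ⟨Or.inl ⟨he, fun ⟨v, hv, hev⟩ => hnot v hv hev⟩, G.not_isDiag_of_mem_edgeSet he⟩
    · refine ⟨Or.inr ⟨v, hv, rfl⟩, ?_⟩
      simp only [Sym2.diagSet, Set.mem_setOf_eq, Sym2.isDiag_iff_proj_eq]
      exact fun h => hv.2.1 h.symm

noncomputable def phi (G : SimpleGraph V) (x y : V) (M : Finset (Sym2 V)) :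
    Finset (Sym2 V) :=
  if h : ∃ v, v ∈ sideNbhd G x y ∧ s(y, v) ∈ M then
    if h2 : ∃ u, s(x, u) ∈ M then
      insert s(x, h.choose) (insert s(y, h2.choose)
        ((M.erase s(y, h.choose)).erase s(x, h2.choose)))
    else insert s(x, h.choose) (M.erase s(y, h.choose))
  else M

noncomputable def psi (G : SimpleGraph V) (x y : V) (M : Finset (Sym2 V)) :
    Finset (Sym2 V) :=
  if h : ∃ v, v ∈ sideNbhd G x y ∧ s(x, v) ∈ M then
    if h2 : ∃ u, s(y, u) ∈ M then
      insert s(y, h.choose) (insert s(x, h2.choose)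
        ((M.erase s(x, h.choose)).erase s(y, h2.choose)))
    else insert s(y, h.choose) (M.erase s(x, h.choose))
  else M

lemma phi_spec {G : SimpleGraph V} {x y : V} {M : Finset (Sym2 V)}
    (hM : M ∈ graphMatchings (compress G x y)) :
    phi G x y M ∈ graphMatchings G ∧ (phi G x y M).card = M.card ∧
      psi G x y (phi G x y M) = M := by
  rw [mem_graphMatchings'] at hM
  obtain ⟨hsub, hm⟩ := hM
  -- no edge from x to the side neighborhood lies in M
  have FnotxN : ∀ v ∈ sideNbhd G x y, s(x, v) ∉ M := by
    intro v hv hmem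
    have hc := hsub _ hmem
    rw [mem_compress_edgeSet] at hc
    rcases hc with ⟨-, hne⟩ | ⟨w, hw, heq⟩
    · exact hne v hv rfl
    · rw [Sym2.eq_iff] at heq
      rcases heq with ⟨hxyeq, -⟩ | ⟨hxw, -⟩
      · exact hw.2.2.2 (hxyeq ▸ hw.2.2.1)
      · exact hw.1 hxw.symm
  by_cases h : ∃ v, v ∈ sideNbhd G x y ∧ s(y, v) ∈ M
  · -- Case B/C: some side edge s(y, v₀) belongs to M
    obtain ⟨hv₀N, hyv₀M⟩ := h.choose_spec
    set v₀ := h.choose with hv₀def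
    obtain ⟨hv₀x, hv₀y, hadjxv₀, hnadjyv₀⟩ := hv₀N
    have hxy : x ≠ y := fun hh => hnadjyv₀ (hh ▸ hadjxv₀)
    have FinG : ∀ e ∈ M, e ≠ s(y, v₀) → e ∈ G.edgeSet := by
      intro e he hne
      have hc := hsub _ he
      rw [mem_compress_edgeSet] at hc
      rcases hc with ⟨hG, -⟩ | ⟨w, hw, rfl⟩
      · exact hG
      · exact absurd (hm _ he _ hyv₀M y (by simp) (by simp)) hne
    have Uy : ∀ f ∈ M, y ∈ f → f = s(y, v₀) := fun f hf hyf =>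
      hm f hf _ hyv₀M y hyf (by simp)
    have Uv₀ : ∀ f ∈ M, v₀ ∈ f → f = s(y, v₀) := fun f hf hvf =>
      hm f hf _ hyv₀M v₀ hvf (by simp)
    have hxv₀notM : s(x, v₀) ∉ M := FnotxN v₀ ⟨hv₀x, hv₀y, hadjxv₀, hnadjyv₀⟩
    by_cases h2 : ∃ u, s(x, u) ∈ M
    · -- Case C: x is also covered in M
      have hu₀M : s(x, h2.choose) ∈ M := h2.choose_spec
      set u₀ := h2.choose with hu₀def
      have hc := hsub _ hu₀M
      rw [mem_compress_edgeSet] at hc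
      have hleft : s(x, u₀) ∈ G.edgeSet ∧ ∀ v ∈ sideNbhd G x y, s(x, u₀) ≠ s(x, v) := by
        rcases hc with hc | ⟨w, hw, heq⟩
        · exact hc
        · rw [Sym2.eq_iff] at heq
          rcases heq with ⟨h1, -⟩ | ⟨h1, -⟩
          · exact absurd h1 hxy
          · exact absurd h1.symm hw.1
      have hadjxu₀ : G.Adj x u₀ := (SimpleGraph.mem_edgeSet G).mp hleft.1
      have hu₀x : u₀ ≠ x := fun hh => G.irrefl (hh ▸ hadjxu₀)
      have hu₀notN : u₀ ∉ sideNbhd G x y := fun hu => hleft.2 u₀ hu rfl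
      have hxu₀ne : s(x, u₀) ≠ s(y, v₀) := by
        rw [ne_eq, Sym2.eq_iff]
        rintro (⟨h1, -⟩ | ⟨h1, -⟩)
        · exact hxy h1
        · exact hv₀x h1.symm
      have hu₀y : u₀ ≠ y := by
        intro hh
        exact hxu₀ne (hm _ hu₀M _ hyv₀M y (by simp [hh]) (by simp))
      have hadjyu₀ : G.Adj y u₀ := by
        by_contra hn
        exact hu₀notN ⟨hu₀x, hu₀y, hadjxu₀, hn⟩
      have hu₀v₀ : u₀ ≠ v₀ := fun hh => hxv₀notM (hh ▸ hu₀M)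
      have hyu₀notM : s(y, u₀) ∉ M := by
        intro hmem
        have := hm _ hmem _ hyv₀M y (by simp) (by simp)
        rw [Sym2.eq_iff] at this
        rcases this with ⟨-, h1⟩ | ⟨h1, -⟩
        · exact hu₀v₀ h1
        · exact hv₀y h1.symm
      have hxv₀ne_yu₀ : s(x, v₀) ≠ s(y, u₀) := by
        rw [ne_eq, Sym2.eq_iff]
        rintro (⟨h1, -⟩ | ⟨h1, -⟩)
        · exact hxy h1
        · exact hu₀x h1.symm
      have Ux : ∀ f ∈ M, x ∈ f → f = s(x, u₀) := fun f hf hxf =>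
        hm f hf _ hu₀M x hxf (by simp)
      have Uu₀ : ∀ f ∈ M, u₀ ∈ f → f = s(x, u₀) := fun f hf hvf =>
        hm f hf _ hu₀M u₀ hvf (by simp)
      set M₂ := (M.erase s(y, v₀)).erase s(x, u₀) with hM₂
      have hxu₀_mem_erase : s(x, u₀) ∈ M.erase s(y, v₀) :=
        Finset.mem_erase.mpr ⟨hxu₀ne, hu₀M⟩
      have hM₂mem : ∀ {f}, f ∈ M₂ → f ∈ M ∧ f ≠ s(y, v₀) ∧ f ≠ s(x, u₀) := by
        intro f hf
        rw [hM₂, Finset.mem_erase, Finset.mem_erase] at hf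
        exact ⟨hf.2.2, hf.2.1, hf.1⟩
      have hyu₀_notM₂ : s(y, u₀) ∉ M₂ := fun hf => hyu₀notM (hM₂mem hf).1
      have hxv₀_not_ins : s(x, v₀) ∉ insert s(y, u₀) M₂ := by
        rw [Finset.mem_insert]
        rintro (hh | hh)
        · exact hxv₀ne_yu₀ hh
        · exact hxv₀notM (hM₂mem hh).1
      have hphi : phi G x y M = insert s(x, v₀) (insert s(y, u₀) M₂) := by
        unfold phi; rw [dif_pos h, dif_pos h2]
      have key2 : ∀ v : V, v ∈ s(x, v₀) → v ∈ s(y, u₀) → False := by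
        intro v hv hv'
        rw [Sym2.mem_iff] at hv hv'
        rcases hv with rfl | rfl <;> rcases hv' with h' | h'
        · exact hxy h'
        · exact hu₀x h'.symm
        · exact hv₀y h'
        · exact hu₀v₀ h'.symm
      have key3 : ∀ f ∈ M₂, ∀ v : V, v ∈ s(x, v₀) → v ∈ f → False := by
        intro f hf v hv hvf
        obtain ⟨hfM, hfne1, hfne2⟩ := hM₂mem hf
        rw [Sym2.mem_iff] at hv
        rcases hv with rfl | rfl
        · exact hfne2 (Ux f hfM hvf)
        · exact hfne1 (Uv₀ f hfM hvf)
      have key4 : ∀ f ∈ M₂, ∀ v : V, v ∈ s(y, u₀) → v ∈ f → False := by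
        intro f hf v hv hvf
        obtain ⟨hfM, hfne1, hfne2⟩ := hM₂mem hf
        rw [Sym2.mem_iff] at hv
        rcases hv with rfl | rfl
        · exact hfne1 (Uy f hfM hvf)
        · exact hfne2 (Uu₀ f hfM hvf)
      have hmem_iff : ∀ {e}, e ∈ phi G x y M ↔ e = s(x, v₀) ∨ e = s(y, u₀) ∨ e ∈ M₂ := by
        intro e
        rw [hphi, Finset.mem_insert, Finset.mem_insert]
      have hmatch : phi G x y M ∈ graphMatchings G := by
        rw [mem_graphMatchings']
        constructor
        · intro e he
          rcases hmem_iff.mp he with rfl | rfl | he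
          · exact (SimpleGraph.mem_edgeSet G).mpr hadjxv₀
          · exact (SimpleGraph.mem_edgeSet G).mpr hadjyu₀
          · exact FinG e (hM₂mem he).1 (hM₂mem he).2.1
        · intro e he f hf v hve hvf
          rcases hmem_iff.mp he with rfl | rfl | he <;>
            rcases hmem_iff.mp hf with rfl | rfl | hf
          · rfl
          · exact (key2 v hve hvf).elim
          · exact (key3 f hf v hve hvf).elim
          · exact (key2 v hvf hve).elim
          · rfl
          · exact (key4 f hf v hve hvf).elim
          · exact (key3 e he v hvf hve).elim
          · exact (key4 e he v hvf hve).elim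
          · exact hm e (hM₂mem he).1 f (hM₂mem hf).1 v hve hvf
      have hcard : (phi G x y M).card = M.card := by
        have hpos : 0 < (M.erase s(y, v₀)).card :=
          Finset.card_pos.mpr ⟨_, hxu₀_mem_erase⟩
        have hpos2 : 0 < M.card := Finset.card_pos.mpr ⟨_, hyv₀M⟩
        rw [hphi, Finset.card_insert_of_notMem hxv₀_not_ins,
          Finset.card_insert_of_notMem hyu₀_notM₂, hM₂,
          Finset.card_erase_of_mem hxu₀_mem_erase,
          Finset.card_erase_of_mem hyv₀M]
        rw [Finset.card_erase_of_mem hyv₀M] at hpos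
        omega
      have hpsi : psi G x y (phi G x y M) = M := by
        have h' : ∃ v, v ∈ sideNbhd G x y ∧ s(x, v) ∈ phi G x y M :=
          ⟨v₀, ⟨hv₀x, hv₀y, hadjxv₀, hnadjyv₀⟩, hmem_iff.mpr (Or.inl rfl)⟩
        have h2' : ∃ u, s(y, u) ∈ phi G x y M :=
          ⟨u₀, hmem_iff.mpr (Or.inr (Or.inl rfl))⟩
        have hcv : h'.choose = v₀ := by
          obtain ⟨hcN, hcmem⟩ := h'.choose_spec
          rcases hmem_iff.mp hcmem with heq | heq | hmem2
          · rw [Sym2.eq_iff] at heq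
            rcases heq with ⟨-, h1⟩ | ⟨h1, -⟩
            · exact h1
            · exact absurd h1.symm hv₀x
          · rw [Sym2.eq_iff] at heq
            rcases heq with ⟨h1, -⟩ | ⟨h1, -⟩
            · exact absurd h1 hxy
            · exact absurd h1.symm hu₀x
          · exact absurd (hM₂mem hmem2).1 (FnotxN _ hcN)
        have hcu : h2'.choose = u₀ := by
          have hcmem := h2'.choose_spec
          rcases hmem_iff.mp hcmem with heq | heq | hmem2
          · rw [Sym2.eq_iff] at heq
            rcases heq with ⟨h1, -⟩ | ⟨h1, -⟩
            · exact absurd h1.symm hxy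
            · exact absurd h1.symm hv₀y
          · rw [Sym2.eq_iff] at heq
            rcases heq with ⟨-, h1⟩ | ⟨h1, -⟩
            · exact h1
            · exact absurd h1.symm hu₀y
          · exact absurd (Uy _ (hM₂mem hmem2).1 (by simp)) (hM₂mem hmem2).2.1
        unfold psi
        rw [dif_pos h', dif_pos h2', hcv, hcu, hphi,
          Finset.erase_insert hxv₀_not_ins, Finset.erase_insert hyu₀_notM₂, hM₂,
          Finset.insert_erase hxu₀_mem_erase, Finset.insert_erase hyv₀M]
      exact ⟨hmatch, hcard, hpsi⟩
    · -- Case B: x is not covered in M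
      have hphi : phi G x y M = insert s(x, v₀) (M.erase s(y, v₀)) := by
        unfold phi; rw [dif_pos h, dif_neg h2]
      have hxv₀_not : s(x, v₀) ∉ M.erase s(y, v₀) := fun hf =>
        hxv₀notM (Finset.mem_erase.mp hf).2
      have hmem_iff : ∀ {e}, e ∈ phi G x y M ↔ e = s(x, v₀) ∨ e ∈ M.erase s(y, v₀) := by
        intro e
        rw [hphi, Finset.mem_insert]
      have key : ∀ f ∈ M.erase s(y, v₀), ∀ v : V, v ∈ s(x, v₀) → v ∈ f → False := by
        intro f hf v hv hvf
        obtain ⟨hfne, hfM⟩ := Finset.mem_erase.mp hf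
        rw [Sym2.mem_iff] at hv
        rcases hv with rfl | rfl
        · obtain ⟨b, rfl⟩ := Sym2.mem_iff_exists.mp hvf
          exact h2 ⟨b, hfM⟩
        · exact hfne (Uv₀ f hfM hvf)
      have hmatch : phi G x y M ∈ graphMatchings G := by
        rw [mem_graphMatchings']
        constructor
        · intro e he
          rcases hmem_iff.mp he with rfl | he
          · exact (SimpleGraph.mem_edgeSet G).mpr hadjxv₀
          · exact FinG e (Finset.mem_erase.mp he).2 (Finset.mem_erase.mp he).1
        · intro e he f hf v hve hvf
          rcases hmem_iff.mp he with rfl | he <;> rcases hmem_iff.mp hf with rfl | hf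
          · rfl
          · exact (key f hf v hve hvf).elim
          · exact (key e he v hvf hve).elim
          · exact hm e (Finset.mem_erase.mp he).2 f (Finset.mem_erase.mp hf).2 v hve hvf
      have hcard : (phi G x y M).card = M.card := by
        have hpos2 : 0 < M.card := Finset.card_pos.mpr ⟨_, hyv₀M⟩
        rw [hphi, Finset.card_insert_of_notMem hxv₀_not,
          Finset.card_erase_of_mem hyv₀M]
        omega
      have hpsi : psi G x y (phi G x y M) = M := by
        have h' : ∃ v, v ∈ sideNbhd G x y ∧ s(x, v) ∈ phi G x y M :=
          ⟨v₀, ⟨hv₀x, hv₀y, hadjxv₀, hnadjyv₀⟩, hmem_iff.mpr (Or.inl rfl)⟩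
        have hcv : h'.choose = v₀ := by
          obtain ⟨hcN, hcmem⟩ := h'.choose_spec
          rcases hmem_iff.mp hcmem with heq | hmem2
          · rw [Sym2.eq_iff] at heq
            rcases heq with ⟨-, h1⟩ | ⟨h1, -⟩
            · exact h1
            · exact absurd h1.symm hv₀x
          · exact absurd (Finset.mem_erase.mp hmem2).2 (FnotxN _ hcN)
        have h2' : ¬∃ u, s(y, u) ∈ phi G x y M := by
          rintro ⟨u, hu⟩
          rcases hmem_iff.mp hu with heq | hmem2
          · rw [Sym2.eq_iff] at heq
            rcases heq with ⟨h1, -⟩ | ⟨h1, -⟩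
            · exact hxy h1.symm
            · exact hv₀y h1.symm
          · exact absurd (Uy _ (Finset.mem_erase.mp hmem2).2 (by simp))
              (Finset.mem_erase.mp hmem2).1
        unfold psi
        rw [dif_pos h', dif_neg h2', hcv, hphi, Finset.erase_insert hxv₀_not,
          Finset.insert_erase hyv₀M]
      exact ⟨hmatch, hcard, hpsi⟩
  · -- Case A : phi M = M
    have hphi : phi G x y M = M := by unfold phi; rw [dif_neg h]
    have hMG : ∀ e ∈ M, e ∈ G.edgeSet := by
      intro e he
      have hc := hsub _ he
      rw [mem_compress_edgeSet] at hc
      rcases hc with ⟨hG, -⟩ | ⟨w, hw, rfl⟩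
      · exact hG
      · exact absurd ⟨w, hw, he⟩ h
    have hpsi : psi G x y M = M := by
      unfold psi
      rw [dif_neg]
      rintro ⟨v, hv, hmem⟩
      exact FnotxN v hv hmem
    rw [hphi]
    exact ⟨mem_graphMatchings'.mpr ⟨hMG, hm⟩, rfl, hpsi⟩

end Aux

/-- For every simple graph `G`, all vertices `x, y` of `G`, and every `k ≥ 0`, the
compression `G_{x→y}` satisfies `m_k(G_{x→y}) ≤ m_k(G)`. -/
theorem mk_compress_le {V : Type*} [Fintype V] (G : SimpleGraph V) (x y : V) (k : ℕ) :
    mkCount (compress G x y) k ≤ mkCount G k := by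
  unfold mkCount
  apply Finset.card_le_card_of_injOn (phi G x y)
  · intro M hMk
    rw [Finset.mem_coe, Finset.mem_filter] at hMk ⊢
    obtain ⟨h1, h2, h3⟩ := phi_spec hMk.1
    exact ⟨h1, by rw [h2, hMk.2]⟩
  · intro M₁ h₁ M₂ h₂ heq
    rw [Finset.mem_coe, Finset.mem_filter] at h₁ h₂
    have e1 := (phi_spec h₁.1).2.2
    have e2 := (phi_spec h₂.1).2.2
    rw [← e1, ← e2, heq]
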